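/- Let μ₁ ≤ μ₂ ≤ ⋯ ≤ μₙ be real numbers with μₙ − μ₁ < π, and let t₁, …, tₙ be nonnegative reals with Σⱼ tⱼ = 1. Then |Σⱼ tⱼ e^{i μⱼ}| ≥ |e^{i μ₁} + e^{i μₙ}|/2 = cos((μₙ − μ₁)/2). In particular, for any unit vector q ∈ ℂⁿ, |Σⱼ |qⱼ|² e^{i μⱼ}| ≥ |e^{i μ₁} + e^{i μₙ}|/2. -/

import Mathlib

theorem stmt9 {n : ℕ} (hn : 1 ≤ n) (μ : Fin n → ℝ) (hmono : Monotone μ)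
    (harc : μ ⟨n - 1, by omega⟩ - μ ⟨0, by omega⟩ < Real.pi)
    (t : Fin n → ℝ) (ht : ∀ j, 0 ≤ t j) (hsum : ∑ j, t j = 1) :
    ‖Complex.exp (Complex.I * (μ ⟨0, by omega⟩ : ℂ)) +
        Complex.exp (Complex.I * (μ ⟨n - 1, by omega⟩ : ℂ))‖ / 2
      ≤ ‖∑ j, (t j : ℂ) * Complex.exp (Complex.I * (μ j : ℂ))‖
    ∧ ‖Complex.exp (Complex.I * (μ ⟨0, by omega⟩ : ℂ)) +
        Complex.exp (Complex.I * (μ ⟨n - 1, by omega⟩ : ℂ))‖ / 2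
      = Real.cos ((μ ⟨n - 1, by omega⟩ - μ ⟨0, by omega⟩) / 2)
    ∧ ∀ q : Fin n → ℂ, ∑ j, ‖q j‖ ^ 2 = 1 →
        ‖Complex.exp (Complex.I * (μ ⟨0, by omega⟩ : ℂ)) +
            Complex.exp (Complex.I * (μ ⟨n - 1, by omega⟩ : ℂ))‖ / 2
          ≤ ‖∑ j, (‖q j‖ ^ 2 : ℂ) * Complex.exp (Complex.I * (μ j : ℂ))‖ := by
  have h0 : (0 : ℕ) < n := hn
  have h1 : n - 1 < n := by omega
  set a : ℝ := μ ⟨0, h0⟩ with ha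
  set b : ℝ := μ ⟨n - 1, h1⟩ with hb
  have hab : a ≤ b := hmono (by simp [Fin.le_def])
  have hba : b - a < Real.pi := harc
  set d : ℝ := (b - a) / 2 with hd
  set c : ℝ := (a + b) / 2 with hc
  have hd0 : 0 ≤ d := by simp only [hd]; linarith
  have hdpi : d < Real.pi / 2 := by simp only [hd]; linarith
  have hcd : 0 ≤ Real.cos d := Real.cos_nonneg_of_mem_Icc
    ⟨by linarith [Real.pi_pos], le_of_lt hdpi⟩
  have heq : ‖Complex.exp (Complex.I * (a : ℂ)) +
      Complex.exp (Complex.I * (b : ℂ))‖ = 2 * Real.cos d := by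
    have e1 : Complex.exp (Complex.I * (a : ℂ)) + Complex.exp (Complex.I * (b : ℂ))
        = Complex.exp (Complex.I * (c : ℂ)) * (2 * Complex.cos (d : ℂ)) := by
      rw [Complex.two_cos, mul_add, ← Complex.exp_add, ← Complex.exp_add,
        add_comm (Complex.exp (Complex.I * (a : ℂ)))]
      congr 2
      · push_cast [hc, hd]; ring
      · push_cast [hc, hd]; ring
    rw [e1, norm_mul, Complex.norm_exp]
    have h2 : (Complex.I * (c : ℂ)).re = 0 := by simp
    rw [h2, Real.exp_zero, one_mul]
    rw [show (2 * Complex.cos (d : ℂ)) = ((2 * Real.cos d : ℝ) : ℂ) by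
      push_cast [Complex.ofReal_cos]; ring]
    rw [Complex.norm_real, Real.norm_eq_abs, abs_of_nonneg (by linarith)]
  have hbound : ∀ j : Fin n, a ≤ μ j ∧ μ j ≤ b := fun j =>
    ⟨hmono (by simp [Fin.le_def]), hmono (by simp only [Fin.le_def]; omega)⟩
  have main : ∀ s : Fin n → ℝ, (∀ j, 0 ≤ s j) → ∑ j, s j = 1 →
      Real.cos d ≤ ‖∑ j, (s j : ℂ) * Complex.exp (Complex.I * (μ j : ℂ))‖ := by
    intro s hs hssum
    set S : ℂ := ∑ j, (s j : ℂ) * Complex.exp (Complex.I * (μ j : ℂ)) with hS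
    have hre : (Complex.exp (-(Complex.I * (c : ℂ))) * S).re
        = ∑ j, s j * Real.cos (μ j - c) := by
      rw [hS, Finset.mul_sum, Complex.re_sum]
      refine Finset.sum_congr rfl fun j _ => ?_
      have hx : Complex.exp (-(Complex.I * (c : ℂ))) * Complex.exp (Complex.I * ((μ j : ℝ) : ℂ))
          = Complex.exp (((μ j - c : ℝ) : ℂ) * Complex.I) := by
        rw [← Complex.exp_add]; congr 1; push_cast; ring
      rw [mul_left_comm, hx, Complex.re_ofReal_mul, Complex.exp_ofReal_mul_I_re]
    have hterm : ∀ j : Fin n, Real.cos d ≤ Real.cos (μ j - c) := by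
      intro j
      obtain ⟨hja, hjb⟩ := hbound j
      have habs : |μ j - c| ≤ d := by
        rw [abs_le]
        constructor
        · simp only [hd, hc] at *; linarith
        · simp only [hd, hc] at *; linarith
      calc Real.cos d ≤ Real.cos |μ j - c| :=
            Real.cos_le_cos_of_nonneg_of_le_pi (abs_nonneg _)
              (by linarith [Real.pi_pos]) habs
        _ = Real.cos (μ j - c) := Real.cos_abs _
    have hlow : Real.cos d ≤ ∑ j, s j * Real.cos (μ j - c) := by
      calc Real.cos d = ∑ j, s j * Real.cos d := by
            rw [← Finset.sum_mul, hssum, one_mul]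
        _ ≤ ∑ j, s j * Real.cos (μ j - c) :=
            Finset.sum_le_sum fun j _ => mul_le_mul_of_nonneg_left (hterm j) (hs j)
    have hfin : (Complex.exp (-(Complex.I * (c : ℂ))) * S).re
        ≤ ‖S‖ := by
      calc (Complex.exp (-(Complex.I * (c : ℂ))) * S).re
          ≤ ‖Complex.exp (-(Complex.I * (c : ℂ))) * S‖ := Complex.re_le_norm _
        _ = ‖S‖ := by
            rw [norm_mul, Complex.norm_exp]
            simp
    linarith [hre ▸ hfin]
  refine ⟨?_, ?_, ?_⟩
  · rw [heq]; linarith [main t ht hsum]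
  · rw [heq]; ring_nf
  · intro q hq
    have := main (fun j => ‖q j‖ ^ 2) (fun j => by positivity) hq
    rw [heq]
    push_cast at this ⊢
    linarith
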